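/- Let 𝒰 be a universe and (X, L, s) a 𝒰-counting system satisfying (C3), (C4) and (C5). Then the specialization preorder ≤ of the topology of closed subsets is a partial order making X an ordinal system relative to 𝒰. Moreover, under this order: s is the successor function of the ordinal system (s(x) = x⁺ for all x); L(I) = ⋁I = ⋁⁺I whenever L(I) is defined; the limit ordinals of the ordinal system are exactly the elements of the form L(I); and the closure of any I ∈ P_𝒰(X) is Ī = {⋁⁺I}^↧. -/

import Mathlib

namespace Paper

/-- The union `⋃_{i ∈ I} f(i)` of the values of `f` on elements of `I`. -/
noncomputable def unionImage (f : ZFSet → ZFSet) (I : ZFSet) : ZFSet :=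
  ZFSet.sUnion (@ZFSet.image f (Classical.allZFSetDefinable _) I)

/-- A universe: a transitive set closed under pairing and under unions of
`𝒰`-indexed families of elements of `𝒰`. -/
def IsUniverse (U : ZFSet) : Prop :=
  U.IsTransitive ∧
  (∀ x ∈ U, ∀ y ∈ U, ({x, y} : ZFSet) ∈ U) ∧
  (∀ I ∈ U, ∀ f : ZFSet → ZFSet, (∀ i ∈ I, f i ∈ U) → unionImage f I ∈ U)

variable {X : Type*}

/-- `A ∈ P_𝒰(X)`: the subset `A` of the type `X` is in bijection with some element of `𝒰`. -/
def SmallSet (U : ZFSet) (A : Set X) : Prop :=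
  ∃ B : ZFSet, B ∈ U ∧ Nonempty (A ≃ B.toSet)

/-- `x < y` in the sense `x ≤ y ∧ x ≠ y`, for an arbitrary relation `le`. -/
def ltR (le : X → X → Prop) (x y : X) : Prop := le x y ∧ x ≠ y

/-- The lower complement `S^↧ = {x | ∀ y ∈ S, x < y}`. -/
def lowerComp (le : X → X → Prop) (S : Set X) : Set X := {x | ∀ y ∈ S, ltR le x y}

/-- The upper complement `S^↑ = {x | ∀ y ∈ S, y < x}`. -/
def upperComp (le : X → X → Prop) (S : Set X) : Set X := {x | ∀ y ∈ S, ltR le y x}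

/-- `b` is the incremented join `⋁⁺S`, i.e. the minimum of `S^↑`. -/
def IsIncJoin (le : X → X → Prop) (S : Set X) (b : X) : Prop :=
  b ∈ upperComp le S ∧ ∀ c ∈ upperComp le S, le b c

/-- `b = x⁺`, i.e. `b = ⋁⁺{x}`. -/
def IsSuccOf (le : X → X → Prop) (x b : X) : Prop := IsIncJoin le {x} b

/-- `b` is the join (least upper bound) of `S`. -/
def IsJoin (le : X → X → Prop) (S : Set X) (b : X) : Prop :=
  (∀ y ∈ S, le y b) ∧ ∀ c, (∀ y ∈ S, le y c) → le b c

/-- An ordinal system relative to the universe `U`: a partial order satisfying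
(O1) lower complements of nonempty subsets lie in `P_𝒰(X)`, and
(O2) every member of `P_𝒰(X)` has an incremented join. -/
def IsOrdinalSystem (U : ZFSet) (le : X → X → Prop) : Prop :=
  IsPartialOrder X le ∧
  (∀ S : Set X, S.Nonempty → SmallSet U (lowerComp le S)) ∧
  (∀ S : Set X, SmallSet U S → ∃ b, IsIncJoin le S b)

/-- `I` is successor-closed: `s(I) ⊆ I`. -/
def SuccClosed (s : X → X) (I : Set X) : Prop := ∀ x ∈ I, s x ∈ I

/-- The domain of the limit function of a `𝒰`-counting system (axiom (C1)):
the successor-closed members of `P_𝒰(X)`. -/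
def LDom (U : ZFSet) (s : X → X) : Set (Set X) :=
  {I | SuccClosed s I ∧ SmallSet U I}

/-- A subset `J` is closed when `s⁻¹(J) ⊆ J` and `A ⊆ J` whenever `L(A) ∈ J`. -/
def IsClosedSub (U : ZFSet) (s : X → X) (L : ∀ I ∈ LDom U s, X) (J : Set X) : Prop :=
  (∀ x : X, s x ∈ J → x ∈ J) ∧
  (∀ A (h : A ∈ LDom U s), L A h ∈ J → A ⊆ J)

/-- The closure `Ī` of `I` in the topology of closed subsets: the intersection
of all closed subsets containing `I`. -/
def cl (U : ZFSet) (s : X → X) (L : ∀ I ∈ LDom U s, X) (I : Set X) : Set X :=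
  {x | ∀ J : Set X, IsClosedSub U s L J → I ⊆ J → x ∈ J}

/-- `x ≤_s y`: `s^m(x) = y` for some `m ∈ ℕ`. -/
def leS (s : X → X) (x y : X) : Prop := ∃ m : ℕ, s^[m] x = y

/-- `x ≤_L y`: `x ∈ I` and `L(I) = y` for some `I ∈ dom L`. -/
def leL (U : ZFSet) (s : X → X) (L : ∀ I ∈ LDom U s, X) (x y : X) : Prop :=
  ∃ I, ∃ h : I ∈ LDom U s, x ∈ I ∧ L I h = y

/-- The specialization preorder: `x ≤ y` iff `x ∈ cl {y}`. -/
def leSpec (U : ZFSet) (s : X → X) (L : ∀ I ∈ LDom U s, X) (x y : X) : Prop :=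
  x ∈ cl U s L {y}

/-- Axiom (C2): the limit function only depends on the closure of its argument. -/
def C2 (U : ZFSet) (s : X → X) (L : ∀ I ∈ LDom U s, X) : Prop :=
  ∀ I J (hI : I ∈ LDom U s) (hJ : J ∈ LDom U s),
    cl U s L I = cl U s L J → L I hI = L J hJ

/-- Axiom (C3): `s⁻¹{L(I)} = ∅` and `s(L(I)) ∉ I` for all `I ∈ dom L`. -/
def C3 (U : ZFSet) (s : X → X) (L : ∀ I ∈ LDom U s, X) : Prop :=
  ∀ I (h : I ∈ LDom U s), (∀ x : X, s x ≠ L I h) ∧ s (L I h) ∉ I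

/-- Axiom (C4): `s` is injective, and `L(I) = L(J)` implies `Ī = J̄`. -/
def C4 (U : ZFSet) (s : X → X) (L : ∀ I ∈ LDom U s, X) : Prop :=
  Function.Injective s ∧
  ∀ I J (hI : I ∈ LDom U s) (hJ : J ∈ LDom U s),
    L I hI = L J hJ → cl U s L I = cl U s L J

/-- Axiom (C5): the induction axiom. -/
def C5 (U : ZFSet) (s : X → X) (L : ∀ I ∈ LDom U s, X) : Prop :=
  ∀ J : Set X, SuccClosed s J →
    (∀ I (h : I ∈ LDom U s), I ⊆ J → L I h ∈ J) → J = Set.univ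

/-- The one-step relation generating the specialization preorder. -/
def Step (U : ZFSet) (s : X → X) (L : ∀ I ∈ LDom U s, X) (x y : X) : Prop :=
  s x = y ∨ leL U s L x y

section Basic
variable {U : ZFSet} {s : X → X} {L : ∀ I ∈ LDom U s, X}

lemma isClosed_cl (I : Set X) : IsClosedSub U s L (cl U s L I) := by
  constructor
  · intro x hx J hJ hIJ
    exact hJ.1 x (hx J hJ hIJ)
  · intro A h hA a ha J hJ hIJ
    exact hJ.2 A h (hA J hJ hIJ) ha

lemma subset_cl (I : Set X) : I ⊆ cl U s L I := fun _ hx _ _ hIJ => hIJ hx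

lemma cl_min {I J : Set X} (hJ : IsClosedSub U s L J) (hIJ : I ⊆ J) :
    cl U s L I ⊆ J := fun _ hx => hx J hJ hIJ

lemma mem_cl_iff {I : Set X} {x : X} :
    x ∈ cl U s L I ↔ ∃ y ∈ I, Relation.ReflTransGen (Step U s L) x y := by
  constructor
  · intro hx
    refine hx {z | ∃ y ∈ I, Relation.ReflTransGen (Step U s L) z y} ⟨?_, ?_⟩ ?_
    · rintro z ⟨y, hy, hr⟩
      exact ⟨y, hy, Relation.ReflTransGen.head (Or.inl rfl) hr⟩
    · rintro A h ⟨y, hy, hr⟩ a ha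
      exact ⟨y, hy, Relation.ReflTransGen.head (Or.inr ⟨A, h, ha, rfl⟩) hr⟩
    · intro y hy; exact ⟨y, hy, Relation.ReflTransGen.refl⟩
  · rintro ⟨y, hy, hr⟩
    induction hr using Relation.ReflTransGen.head_induction_on with
    | refl => exact subset_cl I hy
    | head h1 _ ih =>
      rcases h1 with h1 | ⟨A, hA, ha, hLA⟩
      · exact (isClosed_cl I).1 _ (h1 ▸ ih)
      · exact (isClosed_cl I).2 A hA (hLA ▸ ih) ha

lemma leSpec_iff {x y : X} :
    leSpec U s L x y ↔ Relation.ReflTransGen (Step U s L) x y := by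
  unfold leSpec
  rw [mem_cl_iff]
  simp

lemma leSpec_refl (x : X) : leSpec U s L x x := leSpec_iff.mpr .refl

lemma leSpec_trans {x y z : X} (h1 : leSpec U s L x y) (h2 : leSpec U s L y z) :
    leSpec U s L x z :=
  leSpec_iff.mpr ((leSpec_iff.mp h1).trans (leSpec_iff.mp h2))

lemma cl_mono {I J : Set X} (h : I ⊆ J) : cl U s L I ⊆ cl U s L J :=
  cl_min (isClosed_cl J) (h.trans (subset_cl J))

lemma mem_cl_iff' {I : Set X} {x : X} :
    x ∈ cl U s L I ↔ ∃ y ∈ I, leSpec U s L x y := by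
  rw [mem_cl_iff]; simp only [leSpec_iff]

end Basic

section Order
variable {X : Type*} {U : ZFSet} {s : X → X} {L : ∀ I ∈ LDom U s, X}

lemma acc_of_rtg {x y : X} (h : Relation.ReflTransGen (Step U s L) x y)
    (hy : Acc (Step U s L) y) : Acc (Step U s L) x := by
  induction h using Relation.ReflTransGen.head_induction_on with
  | refl => exact hy
  | head h1 _ ih => exact ih.inv h1

lemma wf_step (hC3 : C3 U s L) (hC4 : C4 U s L) (hC5 : C5 U s L) :
    WellFounded (Step U s L) := by
  constructor
  have huniv := hC5 {x | Acc (Step U s L) x} ?_ ?_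
  · intro a
    have : a ∈ {x | Acc (Step U s L) x} := huniv.symm ▸ Set.mem_univ a
    exact this
  · intro x hx
    constructor
    rintro z (hz | ⟨I, h, hzI, hLI⟩)
    · exact (hC4.1 hz) ▸ hx
    · exact absurd hLI.symm ((hC3 I h).1 x)
  · intro I h hI
    constructor
    rintro z (hz | ⟨I', h', hzI', hL'⟩)
    · exact absurd hz ((hC3 I h).1 z)
    · have hcl : cl U s L I' = cl U s L I := hC4.2 I' I h' h hL'
      obtain ⟨y, hy, hr⟩ := mem_cl_iff.mp (hcl ▸ subset_cl I' hzI')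
      exact acc_of_rtg hr (hI hy)

lemma lt_iff (hC3 : C3 U s L) (hC4 : C4 U s L) (hC5 : C5 U s L) {x y : X} :
    ltR (leSpec U s L) x y ↔ Relation.TransGen (Step U s L) x y := by
  have wf := (wf_step hC3 hC4 hC5).transGen
  constructor
  · rintro ⟨hle, hne⟩
    rcases Relation.reflTransGen_iff_eq_or_transGen.mp (leSpec_iff.mp hle) with h | h
    · exact absurd h.symm hne
    · exact h
  · intro h
    refine ⟨leSpec_iff.mpr h.to_reflTransGen, ?_⟩
    rintro rfl
    exact wf.asymmetric _ _ h h

lemma leSpec_antisymm (hC3 : C3 U s L) (hC4 : C4 U s L) (hC5 : C5 U s L) {x y : X}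
    (h1 : leSpec U s L x y) (h2 : leSpec U s L y x) : x = y := by
  by_contra hne
  have wf := (wf_step hC3 hC4 hC5).transGen
  have t1 := (lt_iff hC3 hC4 hC5).mp ⟨h1, hne⟩
  have t2 := (lt_iff hC3 hC4 hC5).mp ⟨h2, Ne.symm hne⟩
  exact wf.asymmetric _ _ t1 t2

lemma lt_of_le_of_lt' (hC3 : C3 U s L) (hC4 : C4 U s L) (hC5 : C5 U s L) {x y z : X}
    (h1 : leSpec U s L x y) (h2 : ltR (leSpec U s L) y z) : ltR (leSpec U s L) x z := by
  refine ⟨leSpec_trans h1 h2.1, ?_⟩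
  rintro rfl
  exact h2.2 (leSpec_antisymm hC3 hC4 hC5 h2.1 h1)

lemma lt_of_lt_of_le' (hC3 : C3 U s L) (hC4 : C4 U s L) (hC5 : C5 U s L) {x y z : X}
    (h1 : ltR (leSpec U s L) x y) (h2 : leSpec U s L y z) : ltR (leSpec U s L) x z := by
  refine ⟨leSpec_trans h1.1 h2, ?_⟩
  rintro rfl
  exact h1.2 (leSpec_antisymm hC3 hC4 hC5 h1.1 h2)

lemma le_succ_self (x : X) : leSpec U s L x (s x) :=
  leSpec_iff.mpr (Relation.ReflTransGen.single (Or.inl rfl))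

lemma lt_succ_self (hC3 : C3 U s L) (hC4 : C4 U s L) (hC5 : C5 U s L) (x : X) :
    ltR (leSpec U s L) x (s x) :=
  (lt_iff hC3 hC4 hC5).mpr (Relation.TransGen.single (Or.inl rfl))

lemma le_L_of_mem {I : Set X} {h : I ∈ LDom U s} {x : X} (hx : x ∈ I) :
    leSpec U s L x (L I h) :=
  leSpec_iff.mpr (Relation.ReflTransGen.single (Or.inr ⟨I, h, hx, rfl⟩))

lemma lt_L_of_mem (hC3 : C3 U s L) {I : Set X} {h : I ∈ LDom U s} {x : X} (hx : x ∈ I) :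
    ltR (leSpec U s L) x (L I h) := by
  refine ⟨le_L_of_mem hx, ?_⟩
  rintro rfl
  exact (hC3 I h).2 (h.1 _ hx)

/-- Predecessor characterization at a successor. -/
lemma le_succ_iff (hC3 : C3 U s L) (hC4 : C4 U s L) {x z : X} :
    leSpec U s L x (s z) ↔ x = s z ∨ leSpec U s L x z := by
  constructor
  · intro h
    rcases (leSpec_iff.mp h).cases_tail with h | ⟨m, hm, hstep⟩
    · exact Or.inl h.symm
    · rcases hstep with h1 | ⟨I, hI, hmI, hLI⟩
      · exact Or.inr (leSpec_iff.mpr ((hC4.1 h1) ▸ hm))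
      · exact absurd hLI.symm ((hC3 I hI).1 z)
  · rintro (rfl | h)
    · exact leSpec_refl _
    · exact leSpec_trans h (le_succ_self z)

/-- Predecessor characterization at a limit. -/
lemma le_L_imp (hC3 : C3 U s L) (hC4 : C4 U s L) {K : Set X} {hK : K ∈ LDom U s} {x : X}
    (h : leSpec U s L x (L K hK)) : x = L K hK ∨ ∃ w ∈ K, leSpec U s L x w := by
  rcases (leSpec_iff.mp h).cases_tail with h | ⟨m, hm, hstep⟩
  · exact Or.inl h.symm
  · rcases hstep with h1 | ⟨I, hI, hmI, hLI⟩
    · exact absurd h1 ((hC3 K hK).1 m)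
    · have hcl : cl U s L I = cl U s L K := hC4.2 I K hI hK hLI
      obtain ⟨w, hw, hr⟩ := mem_cl_iff.mp (hcl ▸ subset_cl I hmI)
      exact Or.inr ⟨w, hw, leSpec_iff.mpr (hm.trans hr)⟩

lemma lt_L_iff (hC3 : C3 U s L) (hC4 : C4 U s L) (hC5 : C5 U s L) {K : Set X}
    {hK : K ∈ LDom U s} {x : X} :
    ltR (leSpec U s L) x (L K hK) ↔ ∃ w ∈ K, leSpec U s L x w := by
  constructor
  · rintro ⟨hle, hne⟩
    rcases le_L_imp hC3 hC4 hle with h | h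
    · exact absurd h hne
    · exact h
  · rintro ⟨w, hw, hle⟩
    exact lt_of_le_of_lt' hC3 hC4 hC5 hle (lt_L_of_mem hC3 hw)

/-- `s x` is the successor of `x`. -/
lemma isSuccOf_s (hC3 : C3 U s L) (hC4 : C4 U s L) (hC5 : C5 U s L) (x : X) :
    IsSuccOf (leSpec U s L) x (s x) := by
  constructor
  · intro y hy
    rw [Set.mem_singleton_iff] at hy
    exact hy ▸ lt_succ_self hC3 hC4 hC5 x
  · intro c hc
    have hlt : ltR (leSpec U s L) x c := hc x rfl
    obtain ⟨m, hstep, hr⟩ := Relation.TransGen.head'_iff.mp ((lt_iff hC3 hC4 hC5).mp hlt)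
    rcases hstep with h1 | ⟨I, hI, hxI, hLI⟩
    · exact h1 ▸ leSpec_iff.mpr hr
    · have : Relation.ReflTransGen (Step U s L) (s x) m :=
        Relation.ReflTransGen.single (Or.inr ⟨I, hI, hI.1 x hxI, hLI⟩)
      exact leSpec_iff.mpr (this.trans hr)

/-- Every element is a successor or a limit value. -/
lemma form (hC5 : C5 U s L) (x : X) :
    (∃ z, s z = x) ∨ ∃ I, ∃ h : I ∈ LDom U s, L I h = x := by
  have := hC5 {x | (∃ z, s z = x) ∨ ∃ I, ∃ h : I ∈ LDom U s, L I h = x}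
    (fun y _ => Or.inl ⟨y, rfl⟩) (fun I h _ => Or.inr ⟨I, h, rfl⟩)
  have hx : x ∈ {x : X | (∃ z, s z = x) ∨ ∃ I, ∃ h : I ∈ LDom U s, L I h = x} :=
    this.symm ▸ Set.mem_univ x
  exact hx

end Order

section Total
variable {X : Type*} {U : ZFSet} {s : X → X} {L : ∀ I ∈ LDom U s, X}

lemma L_le_of_strict_ub_aux (hC2 : C2 U s L) (hC3 : C3 U s L) (hC4 : C4 U s L)
    (hC5 : C5 U s L) {K : Set X} {hK : K ∈ LDom U s}
    (IHouter : ∀ w, ltR (leSpec U s L) w (L K hK) →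
      ∀ x, leSpec U s L x w ∨ leSpec U s L w x) :
    ∀ x, (∀ w ∈ K, ltR (leSpec U s L) w x) → leSpec U s L (L K hK) x := by
  have wf := (wf_step hC3 hC4 hC5).transGen
  intro x
  induction x using WellFounded.induction wf with
  | _ x IH =>
    intro hub
    rcases form hC5 x with ⟨z, rfl⟩ | ⟨M, hM, rfl⟩
    · have hz : ∀ w ∈ K, ltR (leSpec U s L) w z := by
        intro w hw
        have h1 := hub w hw
        rcases (le_succ_iff hC3 hC4).mp h1.1 with h | h
        · exact absurd h h1.2
        · refine ⟨h, ?_⟩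
          rintro rfl
          exact (hub (s w) (hK.1 w hw)).2 rfl
      exact leSpec_trans (IH z (.single (Or.inl rfl)) hz) (le_succ_self z)
    · have hKcl : K ⊆ cl U s L M := by
        intro w hw
        rcases le_L_imp hC3 hC4 (hub w hw).1 with h | ⟨v, hv, hle⟩
        · exact absurd h (hub w hw).2
        · exact mem_cl_iff'.mpr ⟨v, hv, hle⟩
      by_cases hcc : cl U s L K = cl U s L M
      · exact (hC2 K M hK hM hcc) ▸ leSpec_refl _
      · have hsub : cl U s L K ⊆ cl U s L M := cl_min (isClosed_cl M) hKcl
        obtain ⟨u, huM, huK⟩ : ∃ u, u ∈ cl U s L M ∧ u ∉ cl U s L K := by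
          by_contra hno
          push_neg at hno
          exact hcc (Set.Subset.antisymm hsub hno)
        obtain ⟨v, hv, huv⟩ := mem_cl_iff'.mp huM
        have hux : ltR (leSpec U s L) u (L M hM) :=
          lt_of_le_of_lt' hC3 hC4 hC5 huv (lt_L_of_mem hC3 hv)
        have hwu : ∀ w ∈ K, ltR (leSpec U s L) w u := by
          intro w hw
          rcases IHouter w (lt_L_of_mem hC3 hw) u with h | h
          · exact absurd (mem_cl_iff'.mpr ⟨w, hw, h⟩) huK
          · refine ⟨h, ?_⟩
            rintro rfl
            exact huK (mem_cl_iff'.mpr ⟨w, hw, leSpec_refl w⟩)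
        exact leSpec_trans (IH u ((lt_iff hC3 hC4 hC5).mp hux) hwu) hux.1

lemma total (hC2 : C2 U s L) (hC3 : C3 U s L) (hC4 : C4 U s L) (hC5 : C5 U s L) :
    ∀ y x : X, leSpec U s L x y ∨ leSpec U s L y x := by
  have wf := (wf_step hC3 hC4 hC5).transGen
  intro y
  induction y using WellFounded.induction wf with
  | _ y IH =>
    intro x
    rcases form hC5 y with ⟨z, rfl⟩ | ⟨K, hK, rfl⟩
    · rcases IH z (.single (Or.inl rfl)) x with h | h
      · exact Or.inl (leSpec_trans h (le_succ_self z))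
      · by_cases hxz : z = x
        · exact Or.inl (hxz ▸ le_succ_self z)
        · refine Or.inr ((isSuccOf_s hC3 hC4 hC5 z).2 x ?_)
          intro w hw
          rw [Set.mem_singleton_iff] at hw
          exact hw ▸ ⟨h, hxz⟩
    · by_cases hex : ∃ w ∈ K, leSpec U s L x w
      · obtain ⟨w, hw, h⟩ := hex
        exact Or.inl (leSpec_trans h (le_L_of_mem hw))
      · push_neg at hex
        refine Or.inr (L_le_of_strict_ub_aux hC2 hC3 hC4 hC5
          (fun w hw => IH w ((lt_iff hC3 hC4 hC5).mp hw)) x ?_)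
        intro w hw
        rcases IH w ((lt_iff hC3 hC4 hC5).mp (lt_L_of_mem hC3 hw)) x with h | h
        · exact absurd h (hex w hw)
        · refine ⟨h, ?_⟩
          rintro rfl
          exact hex w hw (leSpec_refl w)

/-- `L K` is below any upper bound of `K`. -/
lemma L_le_of_ub (hC2 : C2 U s L) (hC3 : C3 U s L) (hC4 : C4 U s L) (hC5 : C5 U s L)
    {K : Set X} {hK : K ∈ LDom U s} {c : X} (hub : ∀ w ∈ K, leSpec U s L w c) :
    leSpec U s L (L K hK) c := by
  rcases total hC2 hC3 hC4 hC5 (L K hK) c with h | h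
  · rcases le_L_imp hC3 hC4 h with h' | ⟨w, hw, hle⟩
    · exact h' ▸ leSpec_refl _
    · have hcw : c = w := leSpec_antisymm hC3 hC4 hC5 hle (hub w hw)
      subst hcw
      have hsc := hub (s c) (hK.1 c hw)
      have := leSpec_antisymm hC3 hC4 hC5 hsc (le_succ_self c)
      exact absurd this.symm (lt_succ_self hC3 hC4 hC5 c).2
  · exact h

lemma isJoin_L (hC2 : C2 U s L) (hC3 : C3 U s L) (hC4 : C4 U s L) (hC5 : C5 U s L)
    {K : Set X} (hK : K ∈ LDom U s) : IsJoin (leSpec U s L) K (L K hK) :=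
  ⟨fun _ hy => le_L_of_mem hy, fun _ hc => L_le_of_ub hC2 hC3 hC4 hC5 hc⟩

lemma isIncJoin_L (hC2 : C2 U s L) (hC3 : C3 U s L) (hC4 : C4 U s L) (hC5 : C5 U s L)
    {K : Set X} (hK : K ∈ LDom U s) : IsIncJoin (leSpec U s L) K (L K hK) :=
  ⟨fun _ hy => lt_L_of_mem hC3 hy,
   fun _ hc => L_le_of_ub hC2 hC3 hC4 hC5 (fun w hw => (hc w hw).1)⟩

end Total

section Universe
variable {X : Type*}

lemma mem_unionImage {f : ZFSet → ZFSet} {I z : ZFSet} :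
    z ∈ unionImage f I ↔ ∃ i ∈ I, z ∈ f i := by
  unfold unionImage
  rw [ZFSet.mem_sUnion]
  constructor
  · rintro ⟨w, hw, hz⟩
    obtain ⟨i, hi, rfl⟩ := (@ZFSet.mem_image f (Classical.allZFSetDefinable _) _ _).mp hw
    exact ⟨i, hi, hz⟩
  · rintro ⟨i, hi, hz⟩
    exact ⟨f i, (@ZFSet.mem_image f (Classical.allZFSetDefinable _) _ _).mpr ⟨i, hi, rfl⟩, hz⟩

variable {U : ZFSet} (hU : IsUniverse U)
include hU

lemma mem_of_mem_univ {B b : ZFSet} (hB : B ∈ U) (hb : b ∈ B) : b ∈ U :=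
  hU.1 B hB hb

lemma empty_mem_univ {B : ZFSet} (hB : B ∈ U) : (∅ : ZFSet) ∈ U := by
  induction B using ZFSet.inductionOn with
  | _ B IH =>
    by_cases h : B = ∅
    · exact h ▸ hB
    · rw [ZFSet.eq_empty] at h
      push_neg at h
      obtain ⟨b, hb⟩ := h
      exact IH b hb (mem_of_mem_univ hU hB hb)

lemma singleton_mem_univ {b : ZFSet} (hb : b ∈ U) : ({b} : ZFSet) ∈ U := by
  have := hU.2.1 b hb b hb
  simpa using this

lemma kpair_mem_univ {a b : ZFSet} (ha : a ∈ U) (hb : b ∈ U) : a.pair b ∈ U := by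
  have h1 : ({a} : ZFSet) ∈ U := singleton_mem_univ hU ha
  have h2 : ({a, b} : ZFSet) ∈ U := hU.2.1 a ha b hb
  exact hU.2.1 _ h1 _ h2

lemma subset_mem_univ {B C : ZFSet} (hB : B ∈ U) (hC : C ⊆ B) : C ∈ U := by
  classical
  have he : (∅ : ZFSet) ∈ U := empty_mem_univ hU hB
  have : unionImage (fun b => if b ∈ C then {b} else ∅) B = C := by
    apply ZFSet.ext
    intro z
    rw [mem_unionImage]
    constructor
    · rintro ⟨i, hi, hz⟩
      by_cases h : i ∈ C
      · rw [if_pos h, ZFSet.mem_singleton] at hz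
        exact hz ▸ h
      · rw [if_neg h] at hz
        exact absurd hz (ZFSet.notMem_empty z)
    · intro hz
      exact ⟨z, hC hz, by rw [if_pos hz]; exact ZFSet.mem_singleton.mpr rfl⟩
  rw [← this]
  refine hU.2.2 B hB _ ?_
  intro i hi
  by_cases h : i ∈ C
  · rw [if_pos h]; exact singleton_mem_univ hU (mem_of_mem_univ hU hB hi)
  · rw [if_neg h]; exact he

lemma image_mem_univ {B : ZFSet} (hB : B ∈ U) (f : ZFSet → ZFSet)
    (hf : ∀ b ∈ B, f b ∈ U) :
    @ZFSet.image f (Classical.allZFSetDefinable _) B ∈ U := by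
  have : unionImage (fun b => {f b}) B = @ZFSet.image f (Classical.allZFSetDefinable _) B := by
    apply ZFSet.ext
    intro z
    rw [mem_unionImage, @ZFSet.mem_image f (Classical.allZFSetDefinable _)]
    constructor
    · rintro ⟨i, hi, hz⟩
      simp only [ZFSet.mem_singleton] at hz
      exact ⟨i, hi, hz.symm⟩
    · rintro ⟨i, hi, rfl⟩
      exact ⟨i, hi, by simp⟩
  rw [← this]
  exact hU.2.2 B hB _ (fun i hi => singleton_mem_univ hU (hf i hi))

lemma union2_mem_univ {B C : ZFSet} (hB : B ∈ U) (hC : C ∈ U) : B ∪ C ∈ U := by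
  have hp : ({B, C} : ZFSet) ∈ U := hU.2.1 B hB C hC
  have : unionImage id {B, C} = B ∪ C := by
    apply ZFSet.ext
    intro z
    rw [mem_unionImage, ZFSet.mem_union]
    constructor
    · rintro ⟨i, hi, hz⟩
      rcases ZFSet.mem_pair.mp hi with rfl | rfl
      · exact Or.inl hz
      · exact Or.inr hz
    · rintro (hz | hz)
      · exact ⟨B, ZFSet.mem_pair.mpr (Or.inl rfl), hz⟩
      · exact ⟨C, ZFSet.mem_pair.mpr (Or.inr rfl), hz⟩
  rw [← this]
  refine hU.2.2 _ hp id ?_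
  intro i hi
  rcases ZFSet.mem_pair.mp hi with rfl | rfl <;> assumption

end Universe

section Small
variable {X : Type*} {U : ZFSet} (hU : IsUniverse U)
include hU

lemma small_of_inj {A : Set X} {B : ZFSet} (hB : B ∈ U) (f : X → ZFSet)
    (hf : ∀ a ∈ A, f a ∈ B) (hinj : Set.InjOn f A) : SmallSet U A := by
  classical
  set C := B.sep (fun z => ∃ a ∈ A, f a = z) with hCdef
  have hCB : C ⊆ B := fun z hz => (ZFSet.mem_sep.mp hz).1
  refine ⟨C, subset_mem_univ hU hB hCB, ⟨Equiv.ofBijective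
    (fun a => ⟨f a.1, (Iff.rfl).mpr
      (ZFSet.mem_sep.mpr ⟨hf a.1 a.2, a.1, a.2, rfl⟩)⟩) ⟨?_, ?_⟩⟩⟩
  · intro a b hab
    exact Subtype.ext (hinj a.2 b.2 (congrArg Subtype.val hab))
  · rintro ⟨z, hz⟩
    obtain ⟨-, a, ha, rfl⟩ := ZFSet.mem_sep.mp (hz : z ∈ C)
    exact ⟨⟨a, ha⟩, rfl⟩

lemma small_to_inj {A : Set X} (h : SmallSet U A) :
    ∃ B : ZFSet, B ∈ U ∧ ∃ f : X → ZFSet, (∀ a ∈ A, f a ∈ B) ∧ Set.InjOn f A := by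
  classical
  obtain ⟨B, hB, ⟨e⟩⟩ := h
  refine ⟨B, hB, fun x => if h : x ∈ A then (e ⟨x, h⟩).1 else ∅, ?_, ?_⟩
  · intro a ha
    simp only [dif_pos ha]
    exact (e ⟨a, ha⟩).2
  · intro a ha b hb hab
    simp only [dif_pos ha, dif_pos hb] at hab
    have : e ⟨a, ha⟩ = e ⟨b, hb⟩ := Subtype.ext hab
    have := e.injective this
    exact congrArg Subtype.val this

lemma small_subset {A A' : Set X} (h : SmallSet U A) (hsub : A' ⊆ A) : SmallSet U A' := by
  obtain ⟨B, hB, f, hf, hinj⟩ := small_to_inj hU h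
  exact small_of_inj hU hB f (fun a ha => hf a (hsub ha)) (hinj.mono hsub)

lemma small_insert {A : Set X} (h : SmallSet U A) (y : X) : SmallSet U (insert y A) := by
  classical
  obtain ⟨B, hB, f, hf, hinj⟩ := small_to_inj hU h
  have hem : (∅ : ZFSet) ∈ U := empty_mem_univ hU hB
  have hsem : ({∅} : ZFSet) ∈ U := singleton_mem_univ hU hem
  set p : ZFSet := ZFSet.pair ∅ {∅} with hp
  have hpU : p ∈ U := kpair_mem_univ hU hem hsem
  set B' : ZFSet := (@ZFSet.image (fun b => b.pair ∅) (Classical.allZFSetDefinable _) B) ∪ {p}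
    with hB'
  have hB'U : B' ∈ U := by
    refine union2_mem_univ hU ?_ (singleton_mem_univ hU hpU)
    exact image_mem_univ hU hB _ (fun b hb => kpair_mem_univ hU (mem_of_mem_univ hU hB hb) hem)
  refine small_of_inj hU hB'U (fun x => if x = y then p else (f x).pair ∅) ?_ ?_
  · intro a ha
    by_cases hay : a = y
    · simp only [if_pos hay]
      exact ZFSet.mem_union.mpr (Or.inr (ZFSet.mem_singleton.mpr rfl))
    · simp only [if_neg hay]
      rcases ha with rfl | ha
      · exact absurd rfl hay
      · exact ZFSet.mem_union.mpr (Or.inl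
          ((@ZFSet.mem_image _ (Classical.allZFSetDefinable _) _ _).mpr ⟨f a, hf a ha, rfl⟩))
  · intro a ha b hb hab
    by_cases hay : a = y <;> by_cases hby : b = y
    · exact hay.trans hby.symm
    · simp only [if_pos hay, if_neg hby] at hab
      have := ZFSet.pair_injective hab.symm
      have h2 : ({∅} : ZFSet) ≠ ∅ := by
        intro hc
        have := ZFSet.mem_singleton.mpr (rfl : (∅:ZFSet) = ∅)
        rw [hc] at this
        exact ZFSet.notMem_empty _ this
      exact absurd this.2.symm h2
    · simp only [if_neg hay, if_pos hby] at hab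
      have := ZFSet.pair_injective hab
      have h2 : ({∅} : ZFSet) ≠ ∅ := by
        intro hc
        have := ZFSet.mem_singleton.mpr (rfl : (∅:ZFSet) = ∅)
        rw [hc] at this
        exact ZFSet.notMem_empty _ this
      exact absurd this.2.symm h2
    · simp only [if_neg hay, if_neg hby] at hab
      have hfa := (ZFSet.pair_injective hab).1
      have ha' : a ∈ A := ha.resolve_left hay
      have hb' : b ∈ A := hb.resolve_left hby
      exact hinj ha' hb' hfa

lemma small_biUnion {A : Set X} {F : X → Set X} (hA : SmallSet U A)
    (hF : ∀ w ∈ A, SmallSet U (F w)) : SmallSet U (⋃ w ∈ A, F w) := by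
  classical
  obtain ⟨B, hB, g, hg, hginj⟩ := small_to_inj hU hA
  choose! Bw hBw fw hfw hfinj using fun w (hw : w ∈ A) => small_to_inj hU (hF w hw)
  set G : ZFSet → ZFSet := fun b =>
    if h : ∃ w ∈ A, g w = b then
      @ZFSet.image (fun c => c.pair b) (Classical.allZFSetDefinable _) (Bw h.choose)
    else ∅ with hG
  set D : ZFSet := unionImage G B with hD
  have hDU : D ∈ U := by
    refine hU.2.2 B hB G ?_
    intro b hb
    rw [hG]
    by_cases h : ∃ w ∈ A, g w = b
    · simp only [dif_pos h]
      refine image_mem_univ hU ?_ _ ?_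
      · exact hBw h.choose h.choose_spec.1
      · intro c hc
        exact kpair_mem_univ hU
          (mem_of_mem_univ hU (hBw h.choose h.choose_spec.1) hc)
          (mem_of_mem_univ hU hB hb)
    · simp only [dif_neg h]
      exact empty_mem_univ hU hB
  set f : X → ZFSet := fun x =>
    if h : ∃ w ∈ A, x ∈ F w then (fw h.choose x).pair (g h.choose) else ∅ with hf
  refine small_of_inj hU hDU f ?_ ?_
  · intro x hx
    rw [Set.mem_iUnion₂] at hx
    obtain ⟨w0, hw0, hxw0⟩ := hx
    have h : ∃ w ∈ A, x ∈ F w := ⟨w0, hw0, hxw0⟩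
    rw [hf]
    simp only []
    simp only [dif_pos h]
    set w := h.choose with hw
    have hwA : w ∈ A := h.choose_spec.1
    have hxF : x ∈ F w := h.choose_spec.2
    rw [hD, mem_unionImage]
    refine ⟨g w, hg w hwA, ?_⟩
    have h2 : ∃ w' ∈ A, g w' = g w := ⟨w, hwA, rfl⟩
    have hweq : h2.choose = w := hginj h2.choose_spec.1 hwA h2.choose_spec.2
    rw [hG]
    simp only []
    simp only [dif_pos h2, hweq]
    exact (@ZFSet.mem_image _ (Classical.allZFSetDefinable _) _ _).mpr
      ⟨fw w x, hfw w hwA x hxF, rfl⟩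
  · intro a ha b hb hab
    rw [Set.mem_iUnion₂] at ha hb
    obtain ⟨wa, hwa, hawa⟩ := ha
    have h1 : ∃ w ∈ A, a ∈ F w := ⟨wa, hwa, hawa⟩
    obtain ⟨wb, hwb, hbwb⟩ := hb
    have h2 : ∃ w ∈ A, b ∈ F w := ⟨wb, hwb, hbwb⟩
    rw [hf] at hab
    simp only [] at hab
    simp only [dif_pos h1, dif_pos h2] at hab
    obtain ⟨hfab, hgab⟩ := ZFSet.pair_injective hab
    have hw12 : h1.choose = h2.choose :=
      hginj h1.choose_spec.1 h2.choose_spec.1 hgab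
    rw [← hw12] at hfab
    exact hfinj h1.choose h1.choose_spec.1 h1.choose_spec.2
      (hw12 ▸ h2.choose_spec.2) hfab

end Small

section Downsets
variable {X : Type*} {U : ZFSet} {s : X → X} {L : ∀ I ∈ LDom U s, X}

lemma lt_succ_iff' (hC3 : C3 U s L) (hC4 : C4 U s L) (hC5 : C5 U s L) {w z : X} :
    ltR (leSpec U s L) w (s z) ↔ leSpec U s L w z := by
  constructor
  · rintro ⟨hle, hne⟩
    rcases (le_succ_iff hC3 hC4).mp hle with h | h
    · exact absurd h hne
    · exact h
  · intro h
    refine ⟨(le_succ_iff hC3 hC4).mpr (Or.inr h), ?_⟩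
    rintro rfl
    exact (lt_succ_self hC3 hC4 hC5 z).2
      (leSpec_antisymm hC3 hC4 hC5 (le_succ_self z) h)

lemma le_iff_eq_or_lt (hC3 : C3 U s L) (hC4 : C4 U s L) (hC5 : C5 U s L) {w v : X} :
    leSpec U s L w v ↔ w = v ∨ ltR (leSpec U s L) w v := by
  constructor
  · intro h
    by_cases hev : w = v
    · exact Or.inl hev
    · exact Or.inr ⟨h, hev⟩
  · rintro (rfl | h)
    · exact leSpec_refl w
    · exact h.1

lemma small_downset (hU : IsUniverse U) (hC3 : C3 U s L) (hC4 : C4 U s L) (hC5 : C5 U s L)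
    (x : X) : SmallSet U {z | ltR (leSpec U s L) z x} := by
  have wf := (wf_step hC3 hC4 hC5).transGen
  induction x using WellFounded.induction wf with
  | _ x IH =>
    rcases form hC5 x with ⟨z, rfl⟩ | ⟨K, hK, rfl⟩
    · have hset : {w | ltR (leSpec U s L) w (s z)} = insert z {w | ltR (leSpec U s L) w z} := by
        ext w
        rw [Set.mem_setOf_eq, lt_succ_iff' hC3 hC4 hC5, le_iff_eq_or_lt hC3 hC4 hC5]
        simp [Set.mem_insert_iff]
      rw [hset]
      exact small_insert hU (IH z (.single (Or.inl rfl))) z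
    · have hset : {w | ltR (leSpec U s L) w (L K hK)} =
          ⋃ v ∈ K, insert v {u | ltR (leSpec U s L) u v} := by
        ext w
        rw [Set.mem_setOf_eq, lt_L_iff hC3 hC4 hC5]
        simp only [Set.mem_iUnion, Set.mem_insert_iff, Set.mem_setOf_eq]
        constructor
        · rintro ⟨v, hv, hle⟩
          exact ⟨v, hv, (le_iff_eq_or_lt hC3 hC4 hC5).mp hle⟩
        · rintro ⟨v, hv, h⟩
          exact ⟨v, hv, (le_iff_eq_or_lt hC3 hC4 hC5).mpr h⟩
      rw [hset]
      refine small_biUnion hU hK.2 ?_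
      intro v hv
      exact small_insert hU
        (IH v ((lt_iff hC3 hC4 hC5).mp (lt_L_of_mem hC3 hv))) v

lemma small_cl (hU : IsUniverse U) (hC3 : C3 U s L) (hC4 : C4 U s L) (hC5 : C5 U s L)
    {K : Set X} (hK : SmallSet U K) : SmallSet U (cl U s L K) := by
  have hset : cl U s L K = ⋃ v ∈ K, insert v {u | ltR (leSpec U s L) u v} := by
    ext w
    rw [mem_cl_iff']
    simp only [Set.mem_iUnion, Set.mem_insert_iff, Set.mem_setOf_eq]
    constructor
    · rintro ⟨v, hv, hle⟩
      exact ⟨v, hv, (le_iff_eq_or_lt hC3 hC4 hC5).mp hle⟩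
    · rintro ⟨v, hv, h⟩
      exact ⟨v, hv, (le_iff_eq_or_lt hC3 hC4 hC5).mpr h⟩
  rw [hset]
  refine small_biUnion hU hK ?_
  intro v hv
  exact small_insert hU (small_downset hU hC3 hC4 hC5 v) v

/-- Existence of incremented joins, with an explicit description of the closure. -/
lemma incJoin_strong (hU : IsUniverse U) (hC2 : C2 U s L) (hC3 : C3 U s L)
    (hC4 : C4 U s L) (hC5 : C5 U s L) {S : Set X} (hS : SmallSet U S) :
    ∃ b, IsIncJoin (leSpec U s L) S b ∧
      cl U s L S = {x | ltR (leSpec U s L) x b} := by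
  by_cases hne : S.Nonempty
  · by_cases hmax : ∃ m ∈ S, ∀ y ∈ S, leSpec U s L y m
    · obtain ⟨m, hm, hub⟩ := hmax
      refine ⟨s m, ⟨?_, ?_⟩, ?_⟩
      · intro y hy
        exact (lt_succ_iff' hC3 hC4 hC5).mpr (hub y hy)
      · intro c hc
        refine (isSuccOf_s hC3 hC4 hC5 m).2 c ?_
        intro w hw
        rw [Set.mem_singleton_iff] at hw
        exact hw ▸ hc m hm
      · ext x
        rw [mem_cl_iff', Set.mem_setOf_eq, lt_succ_iff' hC3 hC4 hC5]
        constructor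
        · rintro ⟨v, hv, hle⟩
          exact leSpec_trans hle (hub v hv)
        · intro h
          exact ⟨m, hm, h⟩
    · push_neg at hmax
      have hscl : SuccClosed s (cl U s L S) := by
        intro x hx
        obtain ⟨v, hv, hxv⟩ := mem_cl_iff'.mp hx
        obtain ⟨v', hv', hnle⟩ := hmax v hv
        have hvv' : leSpec U s L v v' :=
          (total hC2 hC3 hC4 hC5 v v').resolve_left hnle
        have hxv' : ltR (leSpec U s L) x v' := by
          refine ⟨leSpec_trans hxv hvv', ?_⟩
          rintro rfl
          exact hnle hxv
        have hsx : leSpec U s L (s x) v' := by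
          refine (isSuccOf_s hC3 hC4 hC5 x).2 v' ?_
          intro w hw
          rw [Set.mem_singleton_iff] at hw
          exact hw ▸ hxv'
        exact mem_cl_iff'.mpr ⟨v', hv', hsx⟩
      have hclL : cl U s L S ∈ LDom U s := ⟨hscl, small_cl hU hC3 hC4 hC5 hS⟩
      refine ⟨L _ hclL, ⟨?_, ?_⟩, ?_⟩
      · intro y hy
        exact lt_L_of_mem hC3 (subset_cl S hy)
      · intro c hc
        refine L_le_of_ub hC2 hC3 hC4 hC5 ?_
        intro w hw
        obtain ⟨v, hv, hwv⟩ := mem_cl_iff'.mp hw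
        exact leSpec_trans hwv (hc v hv).1
      · ext x
        rw [Set.mem_setOf_eq, lt_L_iff hC3 hC4 hC5]
        constructor
        · intro h
          exact ⟨x, h, leSpec_refl x⟩
        · rintro ⟨w, hw, hxw⟩
          obtain ⟨v, hv, hwv⟩ := mem_cl_iff'.mp hw
          exact mem_cl_iff'.mpr ⟨v, hv, leSpec_trans hxw hwv⟩
  · rw [Set.not_nonempty_iff_eq_empty] at hne
    subst hne
    have hLe : (∅ : Set X) ∈ LDom U s := ⟨fun x hx => absurd hx (Set.notMem_empty x), hS⟩
    refine ⟨L ∅ hLe, ⟨?_, ?_⟩, ?_⟩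
    · intro y hy
      exact absurd hy (Set.notMem_empty y)
    · intro c _
      exact L_le_of_ub hC2 hC3 hC4 hC5 (fun w hw => absurd hw (Set.notMem_empty w))
    · ext x
      rw [mem_cl_iff', Set.mem_setOf_eq, lt_L_iff hC3 hC4 hC5]

end Downsets

theorem stmt_18 (U : ZFSet) (hU : IsUniverse U) {X : Type*}
    (s : X → X) (L : ∀ I ∈ LDom U s, X) (hC2 : C2 U s L)
    (hC3 : C3 U s L) (hC4 : C4 U s L) (hC5 : C5 U s L) :
    IsOrdinalSystem U (leSpec U s L) ∧
    (∀ x : X, IsSuccOf (leSpec U s L) x (s x)) ∧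
    (∀ I (h : I ∈ LDom U s),
      IsJoin (leSpec U s L) I (L I h) ∧ IsIncJoin (leSpec U s L) I (L I h)) ∧
    (∀ x : X, (¬ ∃ y, IsSuccOf (leSpec U s L) y x) ↔
      ∃ I, ∃ h : I ∈ LDom U s, L I h = x) ∧
    (∀ I : Set X, SmallSet U I → ∀ b : X, IsIncJoin (leSpec U s L) I b →
      cl U s L I = lowerComp (leSpec U s L) ({b} : Set X)) := by
  refine ⟨⟨?_, ?_, ?_⟩, ?_, ?_, ?_, ?_⟩
  · exact { refl := leSpec_refl, trans := fun a b c => leSpec_trans,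
            antisymm := fun a b h1 h2 => leSpec_antisymm hC3 hC4 hC5 h1 h2 }
  · intro S hS
    obtain ⟨y0, hy0⟩ := hS
    refine small_subset hU (small_downset hU hC3 hC4 hC5 y0) ?_
    intro x hx
    exact hx y0 hy0
  · intro S hS
    obtain ⟨b, hb, -⟩ := incJoin_strong hU hC2 hC3 hC4 hC5 hS
    exact ⟨b, hb⟩
  · exact isSuccOf_s hC3 hC4 hC5
  · intro I h
    exact ⟨isJoin_L hC2 hC3 hC4 hC5 h, isIncJoin_L hC2 hC3 hC4 hC5 h⟩
  · intro x
    constructor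
    · intro hns
      rcases form hC5 x with ⟨z, rfl⟩ | hL
      · exact absurd ⟨z, isSuccOf_s hC3 hC4 hC5 z⟩ hns
      · exact hL
    · rintro ⟨I, h, rfl⟩ ⟨y, hy⟩
      have h1 : leSpec U s L (L I h) (s y) := by
        refine hy.2 (s y) ?_
        intro w hw
        rw [Set.mem_singleton_iff] at hw
        exact hw ▸ lt_succ_self hC3 hC4 hC5 y
      have h2 : leSpec U s L (s y) (L I h) := (isSuccOf_s hC3 hC4 hC5 y).2 _ hy.1
      exact (hC3 I h).1 y (leSpec_antisymm hC3 hC4 hC5 h2 h1)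
  · intro I hI b hb
    obtain ⟨b0, hb0, hcl⟩ := incJoin_strong hU hC2 hC3 hC4 hC5 hI
    have hbb : b = b0 := leSpec_antisymm hC3 hC4 hC5 (hb.2 b0 hb0.1) (hb0.2 b hb.1)
    subst hbb
    rw [hcl]
    ext x
    constructor
    · intro hx y hy
      rw [Set.mem_singleton_iff] at hy
      exact hy ▸ hx
    · intro hx
      exact hx b rfl

end Paper
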